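/- The quasi-shuffle product on K⟨Σ⟩ (words over a commutative additive semigroup Σ), defined by au ⊞ bv = a(u ⊞ bv) + b(au ⊞ v) + (a+b)(u ⊞ v) with the empty word as unit, is commutative and associative. -/

import Mathlib

/-- The quasi-shuffle product on words over a commutative additive semigroup `σ`:
`au ⊞ bv = a(u ⊞ bv) + b(au ⊞ v) + (a+b)(u ⊞ v)`, empty word neutral. -/
noncomputable def qsh {σ : Type*} [AddCommSemigroup σ] :
    List σ → List σ → (List σ →₀ ℤ)
  | [], y => Finsupp.single y 1
  | x :: u, [] => Finsupp.single (x :: u) 1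
  | a :: u, b :: v =>
      (qsh u (b :: v)).mapDomain (a :: ·) +
      (qsh (a :: u) v).mapDomain (b :: ·) +
      (qsh u v).mapDomain ((a + b) :: ·)
termination_by x y => x.length + y.length
decreasing_by all_goals (simp [List.length_cons]; try omega)

section QshAux
set_option linter.unusedSectionVars false

variable {σ : Type*} [AddCommSemigroup σ]

/-- prepend a letter, as a linear map -/
noncomputable def qshCa (a : σ) : (List σ →₀ ℤ) →ₗ[ℤ] (List σ →₀ ℤ) :=
  Finsupp.lmapDomain ℤ ℤ (a :: ·)

lemma qshCa_single (a : σ) (x : List σ) (c : ℤ) :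
    qshCa a (Finsupp.single x c) = Finsupp.single (a :: x) c := by
  simp [qshCa, Finsupp.mapDomain_single]

lemma qsh_nil_left (v : List σ) : qsh [] v = Finsupp.single v 1 := by rw [qsh]
lemma qsh_nil_right (u : List σ) : qsh u [] = Finsupp.single u 1 := by cases u <;> rw [qsh]
lemma qsh_cons_cons (a b : σ) (u v : List σ) : qsh (a::u) (b::v) =
      qshCa a (qsh u (b :: v)) + qshCa b (qsh (a :: u) v) + qshCa (a+b) (qsh u v) := by
  rw [qsh]; rfl

noncomputable def qshInn (x : List σ) : (List σ →₀ ℤ) →ₗ[ℤ] (List σ →₀ ℤ) :=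
  Finsupp.lsum ℤ fun y => LinearMap.toSpanSingleton ℤ _ (qsh x y)

noncomputable def qshMul : (List σ →₀ ℤ) →ₗ[ℤ] (List σ →₀ ℤ) →ₗ[ℤ] (List σ →₀ ℤ) :=
  Finsupp.lsum ℤ fun x => LinearMap.toSpanSingleton ℤ _ (qshInn x)

lemma qshInn_single (x y : List σ) (d : ℤ) :
    qshInn x (Finsupp.single y d) = d • qsh x y := by
  simp [qshInn]

lemma qshMul_single (x : List σ) (c : ℤ) (g : List σ →₀ ℤ) :
    qshMul (Finsupp.single x c) g = c • qshInn x g := by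
  simp [qshMul]

lemma qshMul_single_single (x y : List σ) :
    qshMul (Finsupp.single x 1) (Finsupp.single y 1) = qsh x y := by
  simp [qshMul_single, qshInn_single]

lemma qshInn_apply (x : List σ) (g : List σ →₀ ℤ) :
    qshInn x g = g.sum fun y d => d • qsh x y := by
  rw [qshInn, Finsupp.lsum_apply]
  rfl

lemma qshMul_apply (f g : List σ →₀ ℤ) :
    qshMul f g = f.sum fun x c => c • qshInn x g := by
  rw [qshMul, Finsupp.lsum_apply, Finsupp.sum, Finsupp.sum, LinearMap.sum_apply]
  simp [LinearMap.toSpanSingleton_apply]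

lemma qshMul_nil_left (g : List σ →₀ ℤ) :
    qshMul (Finsupp.single ([] : List σ) 1) g = g := by
  rw [qshMul_single, one_smul, qshInn_apply]
  simp only [qsh_nil_left, Finsupp.smul_single, smul_eq_mul, mul_one]
  exact g.sum_single

lemma qshMul_nil_right (f : List σ →₀ ℤ) :
    qshMul f (Finsupp.single ([] : List σ) 1) = f := by
  rw [qshMul_apply]
  simp only [qshInn_single, qsh_nil_right, one_smul, Finsupp.smul_single, smul_eq_mul, mul_one]
  exact f.sum_single

lemma qshMul_cons (a b : σ) (f g : List σ →₀ ℤ) :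
    qshMul (qshCa a f) (qshCa b g) =
      qshCa a (qshMul f (qshCa b g)) + qshCa b (qshMul (qshCa a f) g) +
        qshCa (a+b) (qshMul f g) := by
  induction f using Finsupp.induction_linear with
  | zero => simp
  | add f1 f2 h1 h2 =>
      simp only [map_add, LinearMap.add_apply] at *
      rw [h1, h2]; abel
  | single x c =>
      induction g using Finsupp.induction_linear with
      | zero => simp
      | add g1 g2 h1 h2 =>
          simp only [map_add, LinearMap.add_apply, map_add] at *
          rw [h1, h2]; abel
      | single y d =>
          simp only [qshCa_single, qshMul_single, qshInn_single, qsh_cons_cons,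
            map_smul, map_add, smul_smul, smul_add, mul_comm]

theorem qsh_comm : ∀ (u v : List σ), qsh u v = qsh v u
  | [], v => by rw [qsh_nil_left, qsh_nil_right]
  | a::u, [] => by rw [qsh_nil_left, qsh_nil_right]
  | a::u, b::v => by
      rw [qsh_cons_cons, qsh_cons_cons, qsh_comm u (b::v), qsh_comm (a::u) v,
        qsh_comm u v, add_comm a b]
      abel
termination_by u v => u.length + v.length

theorem qsh_assoc : ∀ (u v w : List σ),
    qshMul (qsh u v) (Finsupp.single w 1) = qshMul (Finsupp.single u 1) (qsh v w)
  | [], v, w => by rw [qsh_nil_left, qshMul_single_single, qshMul_nil_left]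
  | a::u, [], w => by
      rw [qsh_nil_right, qsh_nil_left, qshMul_single_single]
  | a::u, b::v, [] => by
      rw [qsh_nil_right, qshMul_nil_right, qshMul_single_single]
  | a::u, b::v, c::w => by
      have E1 : qshMul (qsh u (b::v)) (qshCa c (Finsupp.single w 1)) =
          qshMul (Finsupp.single u 1) (qshCa b (qsh v (c::w))) +
          qshMul (Finsupp.single u 1) (qshCa c (qsh (b::v) w)) +
          qshMul (Finsupp.single u 1) (qshCa (b+c) (qsh v w)) := by
        have h := qsh_assoc u (b::v) (c::w)
        rw [← qshCa_single c w 1, qsh_cons_cons b c v w, map_add, map_add] at h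
        exact h
      have E2 : qshMul (qsh (a::u) v) (qshCa c (Finsupp.single w 1)) =
          qshMul (qshCa a (Finsupp.single u 1)) (qsh v (c::w)) := by
        have h := qsh_assoc (a::u) v (c::w)
        rw [← qshCa_single c w 1, ← qshCa_single a u 1] at h
        exact h
      have E3 : qshMul (qsh u v) (qshCa c (Finsupp.single w 1)) =
          qshMul (Finsupp.single u 1) (qsh v (c::w)) := by
        have h := qsh_assoc u v (c::w)
        rw [← qshCa_single c w 1] at h
        exact h
      have E4 : qshMul (qsh u (b::v)) (Finsupp.single w 1) =
          qshMul (Finsupp.single u 1) (qsh (b::v) w) := qsh_assoc u (b::v) w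
      have E5 : qshMul (qsh (a::u) v) (Finsupp.single w 1) =
          qshMul (qshCa a (Finsupp.single u 1)) (qsh v w) := by
        have h := qsh_assoc (a::u) v w
        rw [← qshCa_single a u 1] at h
        exact h
      have E6 : qshMul (qsh u v) (Finsupp.single w 1) =
          qshMul (Finsupp.single u 1) (qsh v w) := qsh_assoc u v w
      have E7 : qshMul (qshCa a (Finsupp.single u 1)) (qsh (b::v) w) =
          qshMul (qshCa a (qsh u (b::v))) (Finsupp.single w 1) +
          qshMul (qshCa b (qsh (a::u) v)) (Finsupp.single w 1) +
          qshMul (qshCa (a+b) (qsh u v)) (Finsupp.single w 1) := by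
        have h := (qsh_assoc (a::u) (b::v) w).symm
        rw [← qshCa_single a u 1, qsh_cons_cons a b u v, map_add, map_add,
          LinearMap.add_apply, LinearMap.add_apply] at h
        exact h
      rw [qsh_cons_cons a b u v, qsh_cons_cons b c v w, ← qshCa_single c w 1,
        ← qshCa_single a u 1]
      simp only [map_add, LinearMap.add_apply, qshMul_cons]
      rw [E1, E2, E3, E4, E5, E6, E7]
      simp only [map_add]
      rw [add_assoc a b c]
      abel
termination_by u v w => u.length + v.length + w.length
decreasing_by all_goals (simp [List.length_cons]; try omega)

end QshAux

/-- The quasi-shuffle product is commutative and associative (associativity stated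
via its bilinear extension to formal combinations of words). -/
theorem qsh_comm_assoc {σ : Type*} [AddCommSemigroup σ] :
    (∀ u v : List σ, qsh u v = qsh v u) ∧
    (∀ u v w : List σ,
      ((qsh u v).sum fun x c => c • qsh x w) =
        ((qsh v w).sum fun x c => c • qsh u x)) := by
  constructor
  · exact qsh_comm
  · intro u v w
    have hL : ((qsh u v).sum fun x c => c • qsh x w) =
        qshMul (qsh u v) (Finsupp.single w 1) := by
      rw [qshMul_apply]
      simp only [qshInn_single, one_smul]
    have hR : ((qsh v w).sum fun x c => c • qsh u x) =
        qshMul (Finsupp.single u 1) (qsh v w) := by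
      rw [qshMul_single, one_smul, qshInn_apply]
    rw [hL, hR, qsh_assoc]
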